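/- Let N be an n-bit Fibonacci NLFSR with n ≥ 2 and f_{n−1} = x_0 ⊕ g, where g is not identically zero. Then there exists a uniform n-bit NLFSR N′ with singular feedback functions whose terminal bit is at most n−2 such that N′ is equivalent to N. -/
import Mathlib


/-- The state-update map of an NLFSR given by feedback functions `F`. -/
def nlfsrStep (n : ℕ) (F : Fin n → (Fin n → Bool) → Bool) (s : Fin n → Bool) : Fin n → Bool :=
  fun i => F i s

/-- The state of the NLFSR at time `t`, starting from initial state `s0`. -/
def stateAt (n : ℕ) (F : Fin n → (Fin n → Bool) → Bool) (s0 : Fin n → Bool) (t : ℕ) :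
    Fin n → Bool :=
  (nlfsrStep n F)^[t] s0

/-- The index `(i+1) mod n`. -/
def succIdx {n : ℕ} (i : Fin n) : Fin n :=
  ⟨((i : ℕ) + 1) % n, Nat.mod_lt _ i.pos⟩

/-- Two NLFSRs are equivalent if there are initial states (possibly different for each)
from which they generate the same output sequences (the output is bit 0). -/
def EquivalentN (n : ℕ) (F F' : Fin n → (Fin n → Bool) → Bool) : Prop :=
  ∃ s0 s0' : Fin n → Bool, ∀ (t : ℕ) (z : Fin n), (z : ℕ) = 0 →
    stateAt n F s0 t z = stateAt n F' s0' t z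

/-- The dependence set of a Boolean function of `n` variables. -/
def depF (n : ℕ) (f : (Fin n → Bool) → Bool) : Finset (Fin n) :=
  Finset.univ.filter
    (fun i => ∃ s : Fin n → Bool, f (Function.update s i false) ≠ f (Function.update s i true))

/-- The (unique) function `g_i` with `f_i = x_{i+1} ⊕ g_i`. -/
def gfun (n : ℕ) (F : Fin n → (Fin n → Bool) → Bool) (i : Fin n) : (Fin n → Bool) → Bool :=
  fun s => xor (F i s) (s (succIdx i))

/-- All feedback functions are singular: `f_i = x_{(i+1) mod n} ⊕ g_i` with
`(i+1) mod n ∉ dep(g_i)`. -/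
def SingularAll (n : ℕ) (F : Fin n → (Fin n → Bool) → Bool) : Prop :=
  ∀ i : Fin n, succIdx i ∉ depF n (gfun n F i)

/-- The terminal bit: the largest index `i ∈ {0,…,n−1}` such that `f_j = x_{j+1}`
for all `j < i`. -/
noncomputable def terminalBit (n : ℕ) (F : Fin n → (Fin n → Bool) → Bool) : ℕ :=
  sSup {i : ℕ | i < n ∧ ∀ j : Fin n, (j : ℕ) < i → ∀ s, F j s = s (succIdx j)}

/-- A uniform NLFSR: all feedback functions are singular and, for every bit `i`
above the terminal bit `τ`, every index in `dep(g_i)` is at most `τ`. -/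
def UniformN (n : ℕ) (F : Fin n → (Fin n → Bool) → Bool) : Prop :=
  SingularAll n F ∧
    ∀ i : Fin n, terminalBit n F < (i : ℕ) →
      ∀ k ∈ depF n (gfun n F i), (k : ℕ) ≤ terminalBit n F

/-- The monomial `p_S(x) = ∧_{i ∈ S} x_i`. -/
def monomial (n : ℕ) (S : Finset (Fin n)) : (Fin n → Bool) → Bool :=
  fun s => decide (∀ i ∈ S, s i = true)

/-- The ANF coefficient of `f` at the monomial with support `S`
(Möbius inversion over `GF(2)`). -/
def anfCoeff (n : ℕ) (f : (Fin n → Bool) → Bool) (S : Finset (Fin n)) : Bool :=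
  decide (Odd (S.powerset.filter (fun T => f (fun i => decide (i ∈ T)) = true)).card)

/-- `S − k = {(i − k) mod n : i ∈ S}`. -/
def shiftSet {n : ℕ} (S : Finset (Fin n)) (k : ℕ) : Finset (Fin n) :=
  S.image (fun i : Fin n => (⟨((i : ℕ) + (n - k % n)) % n, Nat.mod_lt _ i.pos⟩ : Fin n))

/-- The smallest index of a variable in `S`. -/
noncomputable def minIdx {n : ℕ} (S : Finset (Fin n)) : ℕ :=
  sInf {m : ℕ | ∃ i ∈ S, (i : ℕ) = m}

/-- The largest index of a variable in `S`. -/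
noncomputable def maxIdx {n : ℕ} (S : Finset (Fin n)) : ℕ :=
  sSup {m : ℕ | ∃ i ∈ S, (i : ℕ) = m}

/-- Shifting the monomial `p_S` from `g_a` to `g_b`: it replaces `g_a` by `g_a ⊕ p_S`
and `g_b` by `g_b ⊕ p_{S−(a−b)}`, leaving all other feedback functions unchanged. -/
def shiftNLFSR {n : ℕ} (F : Fin n → (Fin n → Bool) → Bool) (a b : Fin n)
    (S : Finset (Fin n)) : Fin n → (Fin n → Bool) → Bool :=
  fun i s =>
    if i = a then xor (F i s) (monomial n S s)
    else if i = b then xor (F i s) (monomial n (shiftSet S ((a : ℕ) - (b : ℕ))) s)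
    else F i s

/-- A Fibonacci NLFSR: `f_i = x_{i+1}` for `0 ≤ i < n−1`, and `f_{n−1} = x_0 ⊕ g_{n−1}`
is singular with `0 ∉ dep(g_{n−1})`. -/
def FibonacciP (n : ℕ) (F : Fin n → (Fin n → Bool) → Bool) : Prop :=
  (∀ i : Fin n, (i : ℕ) < n - 1 → ∀ s, F i s = s (succIdx i)) ∧
  (∀ i : Fin n, (i : ℕ) = n - 1 → succIdx i ∉ depF n (gfun n F i))

/-- A finite directed graph: a finite vertex set together with a finite edge set. -/
structure DiGraph (V : Type) [DecidableEq V] where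
  verts : Finset V
  edges : Finset (V × V)

/-- One substitution step `sub(v_i, v_j)`: if `v_i` has exactly one incoming edge,
coming from `v_j ≠ v_i`, remove `v_i` and, for each outgoing edge `(v_i, v_k)`,
add the edge `(v_j, v_k)`. -/
def SubStep {V : Type} [DecidableEq V] (G G' : DiGraph V) : Prop :=
  ∃ i j : V, i ∈ G.verts ∧ j ∈ G.verts ∧ i ≠ j ∧
    G.edges.filter (fun e => e.2 = i) = {(j, i)} ∧
    G' = ⟨G.verts.erase i,
      (G.edges.filter (fun e => e.1 ≠ i ∧ e.2 ≠ i)) ∪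
        ((G.edges.filter (fun e => e.1 = i)).image (fun e => (j, e.2)))⟩

/-- A graph is reducible to the single vertex `v` if some finite sequence of
substitutions transforms it into a one-vertex graph on `v`. -/
def ReducibleTo {V : Type} [DecidableEq V] (G : DiGraph V) (v : V) : Prop :=
  ∃ G' : DiGraph V, Relation.ReflTransGen SubStep G G' ∧ G'.verts = {v}

/-- The feedback graph of an NLFSR: there is an edge from `v_i` to `v_j`
iff `i ∈ dep(f_j)`. -/
def feedbackGraph (n : ℕ) (F : Fin n → (Fin n → Bool) → Bool) : DiGraph (Fin n) :=
  ⟨Finset.univ, Finset.univ.filter (fun e : Fin n × Fin n => e.1 ∈ depF n (F e.2))⟩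

/-- XOR of the Booleans `f x` over `x ∈ A`. -/
def xorSum {α : Type*} (A : Finset α) (f : α → Bool) : Bool :=
  decide (Odd (A.filter (fun x => f x = true)).card)

/-- The feedback functions `g̃_i` of the fully shifted Galois NLFSR obtained from a
Fibonacci NLFSR whose feedback monomial supports are `P`, with terminal bit `τ`. -/
noncomputable def galoisG (n : ℕ) (P : Finset (Finset (Fin n))) (τ : ℕ) :
    Fin n → (Fin n → Bool) → Bool :=
  fun i s =>
    xor
      (xorSum (P.filter (fun S => minIdx S ≤ n - 1 - τ ∧ n - 1 - minIdx S = (i : ℕ)))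
        (fun S => monomial n (shiftSet S (minIdx S)) s))
      (if (i : ℕ) = τ then
        xorSum (P.filter (fun S => n - 1 - τ < minIdx S))
          (fun S => monomial n (shiftSet S (n - 1 - τ)) s)
      else false)
section Aux

/-- If `f` does not depend on coordinate `i`, its values agree on states equal off `i`. -/
theorem not_dep_congr (n : ℕ) (f : (Fin n → Bool) → Bool) (i : Fin n)
    (h : i ∉ depF n f) (s s' : Fin n → Bool) (hss : ∀ j, j ≠ i → s j = s' j) :
    f s = f s' := by
  have hne : ∀ t : Fin n → Bool,
      f (Function.update t i false) = f (Function.update t i true) := by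
    intro t
    by_contra hc
    exact h (by simp [depF]; exact ⟨t, hc⟩)
  have h' : ∀ b b' : Bool, f (Function.update s i b) = f (Function.update s i b') := by
    intro b b'; cases b <;> cases b' <;> simp [hne s]
  have e1 : s' = Function.update s i (s' i) := by
    funext j
    by_cases hj : j = i
    · subst hj; simp
    · rw [Function.update_of_ne hj]; exact (hss j hj).symm
  calc f s = f (Function.update s i (s i)) := by rw [Function.update_eq_self]
    _ = f (Function.update s i (s' i)) := h' _ _
    _ = f s' := by rw [← e1]

/-- Shift the variables down by one, putting `false` at position 0. -/
def shiftIn (n : ℕ) (s : Fin n → Bool) : Fin n → Bool :=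
  fun j => if (j : ℕ) = 0 then false else s ⟨(j : ℕ) - 1, by have := j.isLt; omega⟩

/-- The Galois NLFSR obtained by shifting the whole feedback `g` from bit `n-1`
to bit `n-2`. -/
def shiftedF (n : ℕ) (g : (Fin n → Bool) → Bool) : Fin n → (Fin n → Bool) → Bool :=
  fun i s =>
    if h : (i : ℕ) = n - 2 then
      xor (s ⟨n - 1, by have := i.isLt; omega⟩) (g (shiftIn n s))
    else s (succIdx i)

theorem stateAt_succ (n : ℕ) (F : Fin n → (Fin n → Bool) → Bool) (s0 : Fin n → Bool)
    (t : ℕ) : stateAt n F s0 (t + 1) = nlfsrStep n F (stateAt n F s0 t) := by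
  simp [stateAt, Function.iterate_succ_apply']

end Aux

theorem fib_state (n : ℕ) (F : Fin n → (Fin n → Bool) → Bool)
    (hFib1 : ∀ i : Fin n, (i : ℕ) < n - 1 → ∀ s, F i s = s (succIdx i))
    (s0 : Fin n → Bool) (hn : 0 < n) :
    ∀ (i : ℕ) (hi : i < n) (t : ℕ),
      stateAt n F s0 t ⟨i, hi⟩ = stateAt n F s0 (t + i) ⟨0, hn⟩ := by
  intro i
  induction i with
  | zero => intro hi t; rfl
  | succ k ih =>
    intro hi t
    have hk : (k : ℕ) < n - 1 := by omega
    have h1 : stateAt n F s0 (t + 1) ⟨k, by omega⟩ = stateAt n F s0 t ⟨k + 1, hi⟩ := by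
      rw [stateAt_succ]
      show F ⟨k, by omega⟩ (stateAt n F s0 t) = _
      rw [hFib1 ⟨k, by omega⟩ hk]
      congr 1
      apply Fin.ext
      simp [succIdx]
      exact Nat.mod_eq_of_lt hi
    rw [← h1, ih (by omega) (t + 1)]
    congr 1
    omega

/-- The auxiliary sequence of values of bit `n-1` of the shifted register. -/
def wseq (n : ℕ) (g : (Fin n → Bool) → Bool) (a : ℕ → Bool) : ℕ → Bool
  | 0 => xor (a (n - 1)) (g (fun j : Fin n => if (j : ℕ) = 0 then false else a ((j : ℕ) - 1)))
  | Nat.succ s => a s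

theorem shiftedF_other (n : ℕ) (g : (Fin n → Bool) → Bool) (i : Fin n)
    (hi : (i : ℕ) ≠ n - 2) (s : Fin n → Bool) : shiftedF n g i s = s (succIdx i) :=
  dif_neg hi

theorem shiftIn_update_last (n : ℕ) (hn : 2 ≤ n) (s : Fin n → Bool) (b : Bool) :
    shiftIn n (Function.update s ⟨n - 1, by omega⟩ b) = shiftIn n s := by
  funext j
  simp only [shiftIn]
  split
  · rfl
  · rename_i hj
    rw [Function.update_of_ne]
    intro hcon
    have hv := congrArg Fin.val hcon
    simp only [Fin.val_mk] at hv
    have := j.isLt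
    omega

theorem shifted_inv (n : ℕ) (hn : 2 ≤ n) (g : (Fin n → Bool) → Bool) (a : ℕ → Bool)
    (hrec : ∀ t, a (t + n) =
      xor (a t) (g (fun j : Fin n => if (j : ℕ) = 0 then false else a (t + (j : ℕ))))) :
    ∀ t, stateAt n (shiftedF n g)
        (fun i : Fin n => if (i : ℕ) = n - 1 then wseq n g a 0 else a (i : ℕ)) t
      = fun i : Fin n => if (i : ℕ) = n - 1 then wseq n g a t else a (t + (i : ℕ)) := by
  intro t
  induction t with
  | zero =>
    funext i
    show (if (i : ℕ) = n - 1 then wseq n g a 0 else a (i : ℕ)) = _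
    by_cases hi : (i : ℕ) = n - 1 <;> simp [hi]
  | succ t ih =>
    funext i
    rw [stateAt_succ]
    show shiftedF n g i (stateAt n (shiftedF n g) _ t) = _
    rw [ih]
    have hilt := i.isLt
    by_cases hi2 : (i : ℕ) = n - 2
    · unfold shiftedF
      rw [dif_pos hi2]
      have h1 : (if ((⟨n - 1, by omega⟩ : Fin n) : ℕ) = n - 1 then wseq n g a t
          else a (t + ((⟨n - 1, by omega⟩ : Fin n) : ℕ))) = wseq n g a t := by
        simp
      have hsh : shiftIn n (fun k : Fin n => if (k : ℕ) = n - 1 then wseq n g a t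
            else a (t + (k : ℕ)))
          = fun j : Fin n => if (j : ℕ) = 0 then false else a (t + ((j : ℕ) - 1)) := by
        funext j
        simp only [shiftIn]
        split
        · rfl
        · rename_i hj
          have hjlt := j.isLt
          show (if (j : ℕ) - 1 = n - 1 then wseq n g a t else a (t + ((j : ℕ) - 1))) = _
          rw [if_neg (by omega)]
      show xor (if ((⟨n - 1, by omega⟩ : Fin n) : ℕ) = n - 1 then wseq n g a t
          else a (t + ((⟨n - 1, by omega⟩ : Fin n) : ℕ))) _ = _
      rw [h1, hsh, if_neg (show (i : ℕ) ≠ n - 1 by omega), hi2]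
      cases t with
      | zero =>
        have hM : (fun j : Fin n => if (j : ℕ) = 0 then false else a (0 + ((j : ℕ) - 1)))
            = fun j : Fin n => if (j : ℕ) = 0 then false else a ((j : ℕ) - 1) := by
          funext j
          by_cases hj : (j : ℕ) = 0
          · simp [hj]
          · rw [if_neg hj, if_neg hj, Nat.zero_add]
        rw [hM]
        show xor (xor (a (n - 1)) _) _ = _
        rw [Bool.xor_assoc, Bool.xor_self, Bool.xor_false]
        congr 1
        omega
      | succ s =>
        have hM : (fun j : Fin n => if (j : ℕ) = 0 then false else a (s + 1 + ((j : ℕ) - 1)))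
            = fun j : Fin n => if (j : ℕ) = 0 then false else a (s + (j : ℕ)) := by
          funext j
          by_cases hj : (j : ℕ) = 0
          · simp [hj]
          · rw [if_neg hj, if_neg hj]
            congr 1
            omega
        rw [hM]
        show xor (a s) _ = a (s + 1 + 1 + (n - 2))
        have h2 : s + 1 + 1 + (n - 2) = s + n := by omega
        rw [h2, hrec s]
    · by_cases hi1 : (i : ℕ) = n - 1
      · unfold shiftedF
        rw [dif_neg hi2]
        have hsucc : succIdx i = ⟨0, by omega⟩ := by
          apply Fin.ext
          show ((i : ℕ) + 1) % n = 0
          rw [hi1]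
          have h : n - 1 + 1 = n := by omega
          rw [h, Nat.mod_self]
        rw [hsucc]
        show (if (0 : ℕ) = n - 1 then wseq n g a t else a (t + 0)) = _
        rw [if_neg (by omega), if_pos hi1]
        rfl
      · unfold shiftedF
        rw [dif_neg hi2]
        have hsucc : succIdx i = ⟨(i : ℕ) + 1, by omega⟩ := by
          apply Fin.ext
          exact Nat.mod_eq_of_lt (by omega)
        rw [hsucc]
        show (if (i : ℕ) + 1 = n - 1 then wseq n g a t else a (t + ((i : ℕ) + 1))) = _
        rw [if_neg (by omega), if_neg hi1]
        congr 1
        omega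

theorem shiftedF_key (n : ℕ) (hn : 2 ≤ n) (g : (Fin n → Bool) → Bool) (i : Fin n)
    (hi : (i : ℕ) = n - 2)
    (hsucc : succIdx i = ⟨n - 1, by omega⟩) (s : Fin n → Bool) :
    ∀ b, gfun n (shiftedF n g) i (Function.update s ⟨n - 1, by omega⟩ b)
          = g (shiftIn n s) := by
  intro b
  show xor (shiftedF n g i _) (Function.update s ⟨n - 1, by omega⟩ b (succIdx i)) = _
  rw [hsucc]
  unfold shiftedF
  rw [dif_pos hi, shiftIn_update_last n hn s b]
  simp only [Function.update_self]
  cases b <;> cases g (shiftIn n s) <;> rfl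

theorem shiftedF_singular (n : ℕ) (hn : 2 ≤ n) (g : (Fin n → Bool) → Bool) :
    SingularAll n (shiftedF n g) := by
  intro i
  by_cases hi : (i : ℕ) = n - 2
  · have hilt := i.isLt
    have hsucc : succIdx i = ⟨n - 1, by omega⟩ := by
      apply Fin.ext
      show ((i : ℕ) + 1) % n = n - 1
      rw [hi]
      have h : n - 2 + 1 = n - 1 := by omega
      rw [h]
      exact Nat.mod_eq_of_lt (by omega)
    rw [hsucc]
    simp only [depF, Finset.mem_filter, Finset.mem_univ, true_and, not_exists]
    intro s hs
    apply hs
    rw [shiftedF_key n hn g i hi hsucc s, shiftedF_key n hn g i hi hsucc s]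
  · simp only [depF, Finset.mem_filter, Finset.mem_univ, true_and, not_exists]
    intro s hs
    apply hs
    show xor (shiftedF n g i _) _ = xor (shiftedF n g i _) _
    rw [shiftedF_other n g i hi, shiftedF_other n g i hi, Bool.xor_self, Bool.xor_self]

theorem shiftedF_terminal (n : ℕ) (hn : 2 ≤ n) (g : (Fin n → Bool) → Bool)
    (hgs : ∃ s, g (shiftIn n s) = true) :
    terminalBit n (shiftedF n g) = n - 2 := by
  have hgreat : IsGreatest
      {i : ℕ | i < n ∧ ∀ j : Fin n, (j : ℕ) < i → ∀ s, shiftedF n g j s = s (succIdx j)}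
      (n - 2) := by
    constructor
    · exact ⟨by omega, fun j hj s => shiftedF_other n g j (by omega) s⟩
    · rintro i ⟨hin, hiall⟩
      by_contra hcon
      push_neg at hcon
      obtain ⟨s, hs⟩ := hgs
      have h2 := hiall ⟨n - 2, by omega⟩ (by show n - 2 < i; omega) s
      unfold shiftedF at h2
      rw [dif_pos rfl] at h2
      have hsucc : succIdx (⟨n - 2, by omega⟩ : Fin n) = ⟨n - 1, by omega⟩ := by
        apply Fin.ext
        show (n - 2 + 1) % n = n - 1
        have h : n - 2 + 1 = n - 1 := by omega
        rw [h]
        exact Nat.mod_eq_of_lt (by omega)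
      rw [hsucc, hs] at h2
      cases hx : s ⟨n - 1, by omega⟩ <;> rw [hx] at h2 <;> simp at h2
  exact hgreat.csSup_eq

theorem shiftedF_uniform (n : ℕ) (hn : 2 ≤ n) (g : (Fin n → Bool) → Bool)
    (hgs : ∃ s, g (shiftIn n s) = true) :
    UniformN n (shiftedF n g) := by
  refine ⟨shiftedF_singular n hn g, ?_⟩
  intro i hi k hk
  rw [shiftedF_terminal n hn g hgs] at hi
  have hilt := i.isLt
  have hine : (i : ℕ) ≠ n - 2 := by omega
  exfalso
  simp only [depF, Finset.mem_filter, Finset.mem_univ, true_and] at hk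
  obtain ⟨s, hs⟩ := hk
  apply hs
  show xor (shiftedF n g i _) _ = xor (shiftedF n g i _) _
  rw [shiftedF_other n g i hine, shiftedF_other n g i hine, Bool.xor_self, Bool.xor_self]

/-- every Fibonacci NLFSR (n ≥ 2, with non-zero feedback `g`) is
equivalent to a uniform NLFSR with singular feedback functions whose terminal bit
is at most `n − 2`. -/
theorem fibonacci_terminal_reducible (n : ℕ) (hn : 2 ≤ n)
    (F : Fin n → (Fin n → Bool) → Bool) (hFib : FibonacciP n F)
    (l : Fin n) (hl : (l : ℕ) = n - 1)
    (hg : ∃ s : Fin n → Bool, gfun n F l s = true) :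
    ∃ F' : Fin n → (Fin n → Bool) → Bool,
      UniformN n F' ∧ terminalBit n F' ≤ n - 2 ∧ EquivalentN n F' F := by
  have hsl : succIdx l = ⟨0, by omega⟩ := by
    apply Fin.ext
    show ((l : ℕ) + 1) % n = 0
    rw [hl]
    have h : n - 1 + 1 = n := by omega
    rw [h, Nat.mod_self]
  have hdep0 : (⟨0, by omega⟩ : Fin n) ∉ depF n (gfun n F l) := by
    have h2 := hFib.2 l hl
    rwa [hsl] at h2
  have hFl : ∀ s, F l s = xor (gfun n F l s) (s ⟨0, by omega⟩) := by
    intro s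
    have hx : gfun n F l s = xor (F l s) (s (succIdx l)) := rfl
    rw [hsl] at hx
    rw [hx]
    cases F l s <;> cases s ⟨0, by omega⟩ <;> rfl
  -- nontriviality of g ∘ shiftIn
  have hgs : ∃ s, gfun n F l (shiftIn n s) = true := by
    obtain ⟨sx, hsx⟩ := hg
    refine ⟨fun k => if h : (k : ℕ) + 1 < n then sx ⟨(k : ℕ) + 1, h⟩ else false, ?_⟩
    rw [not_dep_congr n (gfun n F l) ⟨0, by omega⟩ hdep0 _ sx ?_]
    · exact hsx
    · intro j hj
      have hj0 : (j : ℕ) ≠ 0 := fun h => hj (Fin.ext h)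
      have hjlt := j.isLt
      simp only [shiftIn, if_neg hj0]
      have hlt : (j : ℕ) - 1 + 1 < n := by omega
      rw [dif_pos hlt]
      congr 1
      apply Fin.ext
      show (j : ℕ) - 1 + 1 = (j : ℕ)
      omega
  -- the output sequence of F from the all-false state
  set a : ℕ → Bool := fun t => stateAt n F (fun _ => false) t ⟨0, by omega⟩ with ha
  have hA : ∀ (i : ℕ) (hi : i < n) (t : ℕ),
      stateAt n F (fun _ => false) t ⟨i, hi⟩ = a (t + i) :=
    fib_state n F hFib.1 (fun _ => false) (by omega)
  have hrec : ∀ t, a (t + n) =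
      xor (a t) (gfun n F l (fun j : Fin n => if (j : ℕ) = 0 then false else a (t + (j : ℕ)))) := by
    intro t
    have h1 : stateAt n F (fun _ => false) (t + 1) ⟨n - 1, by omega⟩ = a (t + n) := by
      rw [hA (n - 1) (by omega) (t + 1)]
      congr 1
      omega
    have h2 : stateAt n F (fun _ => false) (t + 1) ⟨n - 1, by omega⟩
        = xor (gfun n F l (stateAt n F (fun _ => false) t)) (a t) := by
      rw [stateAt_succ]
      show F ⟨n - 1, by omega⟩ (stateAt n F (fun _ => false) t) = _
      have hlfin : l = ⟨n - 1, by omega⟩ := Fin.ext hl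
      rw [← hlfin, hFl]
    have h3 : gfun n F l (stateAt n F (fun _ => false) t)
        = gfun n F l (fun j : Fin n => if (j : ℕ) = 0 then false else a (t + (j : ℕ))) := by
      apply not_dep_congr n (gfun n F l) ⟨0, by omega⟩ hdep0
      intro j hj
      have hj0 : (j : ℕ) ≠ 0 := fun h => hj (Fin.ext h)
      rw [if_neg hj0]
      have := hA (j : ℕ) j.isLt t
      simpa using this
    rw [← h1, h2, h3, Bool.xor_comm]
  have hInv := shifted_inv n hn (gfun n F l) a hrec
  refine ⟨shiftedF n (gfun n F l), shiftedF_uniform n hn (gfun n F l) hgs,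
    le_of_eq (shiftedF_terminal n hn (gfun n F l) hgs), ?_⟩
  refine ⟨fun i : Fin n => if (i : ℕ) = n - 1 then wseq n (gfun n F l) a 0 else a (i : ℕ),
    fun _ => false, ?_⟩
  intro t z hz
  have hzz : z = ⟨0, by omega⟩ := Fin.ext hz
  rw [hzz]
  rw [hInv t]
  show (if (0 : ℕ) = n - 1 then wseq n (gfun n F l) a t else a (t + 0)) = _
  rw [if_neg (by omega)]
  have := hA 0 (by omega) t
  rw [this]
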